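/- Let M be a real nonassociative algebra with unit having a basis {1, i, j, k} whose multiplication is given by table (Tn) with parameters a, b, c, d, f, g, h, e ∈ ℝ. Assume that for every q ∈ M with q² = −1 and every y ∈ M one has (q, q, y) = 0 and (y, q, q) = 0. Then every q ∈ M with q² = −1 lies in span_ℝ{i, j, k}. -/

import Mathlib

set_option maxHeartbeats 1600000


/-- The associator of a nonassociative algebra: `(x, y, z) = (xy)z - x(yz)`. -/
def assocator {A : Type*} [NonAssocRing A] (x y z : A) : A :=
  x * y * z - x * (y * z)

/-- Lemma 1: in a real nonassociative unital algebra with basis `{1, i, j, k}` multiplying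
according to table `(Tn)`, if all associators `(q,q,y)` and `(y,q,q)` vanish whenever
`q² = -1`, then every `q` with `q² = -1` lies in `span ℝ {i, j, k}`. -/
theorem imaginaryUnits_subset_span_ijk {M : Type*} [NonAssocRing M] [Module ℝ M]
    [SMulCommClass ℝ M M] [IsScalarTower ℝ M M]
    (a b c d f g h e : ℝ) (B : Module.Basis (Fin 4) ℝ M) (i j k : M)
    (hB0 : B 0 = 1) (hB1 : B 1 = i) (hB2 : B 2 = j) (hB3 : B 3 = k)
    (hii : i * i = -1) (hij : i * j = k) (hik : i * k = -j)
    (hji : j * i = -k) (hki : k * i = j)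
    (hjj : j * j = a • (1 : M) + b • i + c • j + d • k)
    (hkk : k * k = a • (1 : M) + b • i + c • j + d • k)
    (hjk : j * k = f • (1 : M) + g • i + h • j + e • k)
    (hkj : k * j = -(f • (1 : M) + g • i + h • j + e • k))
    (hPA : ∀ q : M, q * q = -1 → ∀ y : M, assocator q q y = 0 ∧ assocator y q q = 0) :
    ∀ q : M, q * q = -1 → q ∈ Submodule.span ℝ ({i, j, k} : Set M) := by
  intro q hq
  have hind : ∀ c0 c1 c2 c3 : ℝ, c0 • (1:M) + c1 • i + c2 • j + c3 • k = 0 →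
      c0 = 0 ∧ c1 = 0 ∧ c2 = 0 ∧ c3 = 0 := by
    intro c0 c1 c2 c3 hc
    have hli := Fintype.linearIndependent_iff.mp B.linearIndependent ![c0, c1, c2, c3] ?_
    · exact ⟨hli 0, hli 1, hli 2, hli 3⟩
    · rw [Fin.sum_univ_four]
      simpa [hB0, hB1, hB2, hB3] using hc
  obtain ⟨t, x, y, z, hq_eq⟩ : ∃ t x y z : ℝ, q = t • (1:M) + x • i + y • j + z • k := by
    refine ⟨B.repr q 0, B.repr q 1, B.repr q 2, B.repr q 3, ?_⟩
    have h := B.sum_repr q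
    rw [Fin.sum_univ_four, hB0, hB1, hB2, hB3] at h
    exact h.symm
  have hE := hind (t*t - x*x + a*(y*y+z*z) + 1) (2*(t*x) + b*(y*y+z*z))
      (2*(t*y) + c*(y*y+z*z)) (2*(t*z) + d*(y*y+z*z)) (by
    calc (t*t - x*x + a*(y*y+z*z) + 1) • (1:M) + (2*(t*x) + b*(y*y+z*z)) • i
          + (2*(t*y) + c*(y*y+z*z)) • j + (2*(t*z) + d*(y*y+z*z)) • k
        = q * q + 1 := by
          rw [hq_eq]
          simp only [mul_add, add_mul, smul_mul_assoc, mul_smul_comm, one_mul, mul_one,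
            neg_mul, mul_neg, hii, hij, hik, hji, hki, hjj, hkk, hjk, hkj]
          module
      _ = 0 := by rw [hq]; simp)
  have ht : t = 0 := by
    by_cases hs : y*y + z*z = 0
    · have hy : y = 0 := by nlinarith [sq_nonneg y, sq_nonneg z]
      have hz : z = 0 := by nlinarith [sq_nonneg y, sq_nonneg z]
      obtain ⟨h0, h1, -, -⟩ := hE
      rw [hs] at h0 h1
      have htx : t * x = 0 := by linarith
      rcases mul_eq_zero.mp htx with h' | h'
      · exact h'
      · nlinarith
    · -- from (q,q,i) = 0 : f = b, g = -a, h = -d, e = c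
      have hA1 := hind ((y*y+z*z)*(f-b)) ((y*y+z*z)*(g+a)) ((y*y+z*z)*(h+d))
          ((y*y+z*z)*(e-c)) (by
        have hA := (hPA q hq i).1
        rw [assocator] at hA
        calc ((y*y+z*z)*(f-b)) • (1:M) + ((y*y+z*z)*(g+a)) • i + ((y*y+z*z)*(h+d)) • j
              + ((y*y+z*z)*(e-c)) • k
            = q * q * i - q * (q * i) := by
              rw [hq_eq]
              simp only [mul_add, add_mul, smul_mul_assoc, mul_smul_comm, one_mul, mul_one,
                neg_mul, mul_neg, hii, hij, hik, hji, hki, hjj, hkk, hjk, hkj]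
              module
          _ = 0 := hA)
      obtain ⟨hf', hg', hh', he'⟩ := hA1
      have hf : f = b := by
        have := (mul_eq_zero.mp hf').resolve_left hs; linarith
      have hg : g = -a := by
        have := (mul_eq_zero.mp hg').resolve_left hs; linarith
      have hh : h = -d := by
        have := (mul_eq_zero.mp hh').resolve_left hs; linarith
      have he : e = c := by
        have := (mul_eq_zero.mp he').resolve_left hs; linarith
      rw [hf, hg, hh, he] at hjk hkj
      -- from (j,q,q) = 0 : d = 0 ; from (k,q,q) = 0 : c = 0
      have hAj := hind (-((2*(y*y+z*z))*(b*d))) ((2*(y*y+z*z))*(a*d)) ((2*(y*y+z*z))*(d*d))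
          ((2*(y*y+z*z))*(b - c*d)) (by
        have hA := (hPA q hq j).2
        rw [assocator] at hA
        calc (-((2*(y*y+z*z))*(b*d))) • (1:M) + ((2*(y*y+z*z))*(a*d)) • i
              + ((2*(y*y+z*z))*(d*d)) • j + ((2*(y*y+z*z))*(b - c*d)) • k
            = j * q * q - j * (q * q) := by
              rw [hq_eq]
              simp only [mul_add, add_mul, smul_mul_assoc, mul_smul_comm, one_mul, mul_one,
                neg_mul, mul_neg, hii, hij, hik, hji, hki, hjj, hkk, hjk, hkj]
              module
          _ = 0 := hA)
      have hAk := hind ((2*(y*y+z*z))*(b*c)) (-((2*(y*y+z*z))*(a*c)))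
          (-((2*(y*y+z*z))*(c*d + b))) ((2*(y*y+z*z))*(c*c)) (by
        have hA := (hPA q hq k).2
        rw [assocator] at hA
        calc ((2*(y*y+z*z))*(b*c)) • (1:M) + (-((2*(y*y+z*z))*(a*c))) • i
              + (-((2*(y*y+z*z))*(c*d + b))) • j + ((2*(y*y+z*z))*(c*c)) • k
            = k * q * q - k * (q * q) := by
              rw [hq_eq]
              simp only [mul_add, add_mul, smul_mul_assoc, mul_smul_comm, one_mul, mul_one,
                neg_mul, mul_neg, hii, hij, hik, hji, hki, hjj, hkk, hjk, hkj]
              module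
          _ = 0 := hA)
      have h2s : (2:ℝ)*(y*y+z*z) ≠ 0 := by
        intro h'; exact hs (by linarith)
      have hd : d = 0 := by
        have := (mul_eq_zero.mp hAj.2.2.1).resolve_left h2s
        exact mul_self_eq_zero.mp this
      have hc : c = 0 := by
        have := (mul_eq_zero.mp hAk.2.2.2).resolve_left h2s
        exact mul_self_eq_zero.mp this
      obtain ⟨-, -, h2, h3⟩ := hE
      rw [hc] at h2; rw [hd] at h3
      have hty : t * y = 0 := by linarith
      have htz : t * z = 0 := by linarith
      rcases mul_eq_zero.mp hty with h' | hy0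
      · exact h'
      rcases mul_eq_zero.mp htz with h' | hz0
      · exact h'
      exact absurd (by rw [hy0, hz0]; ring) hs
  have hmem : x • i + y • j + z • k ∈ Submodule.span ℝ ({i, j, k} : Set M) := by
    refine Submodule.add_mem _ (Submodule.add_mem _ ?_ ?_) ?_ <;>
      exact Submodule.smul_mem _ _ (Submodule.subset_span (by simp))
  rw [hq_eq, ht]
  simpa using hmem
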